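/- For every positive integer n, the general position number of the n-dimensional integer lattice equals 2^(2^(n-1)). That is: every general position set S ⊆ ℤ^n has cardinality at most 2^(2^(n-1)), and there exists a general position set S ⊆ ℤ^n with exactly 2^(2^(n-1)) elements. -/

import Mathlib

/-- The ℓ1 (graph) distance on the integer lattice ℤ^n. -/
def d1 {n : ℕ} (u v : Fin n → ℤ) : ℤ := ∑ i, |u i - v i|

/-- A set `S ⊆ ℤ^n` is a general position set if no three pairwise distinct
points of `S` lie on a common geodesic of the grid graph `P_∞^n`. -/
def IsGPSet {n : ℕ} (S : Set (Fin n → ℤ)) : Prop :=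
  ∀ u ∈ S, ∀ v ∈ S, ∀ w ∈ S, u ≠ v → u ≠ w → v ≠ w →
    d1 u w ≠ d1 u v + d1 v w

open Function Finset

/-- `q` lies (weakly) between `p` and `r`. -/
def Btw3 (p q r : ℤ) : Prop := (p ≤ q ∧ q ≤ r) ∨ (r ≤ q ∧ q ≤ p)

lemma abs_add_between {p q r : ℤ} (h : Btw3 p q r) : |p - r| = |p - q| + |q - r| := by
  have h1 := abs_cases (p - q)
  have h2 := abs_cases (q - r)
  have h3 := abs_cases (p - r)
  rcases h with ⟨ha, hb⟩ | ⟨ha, hb⟩ <;> omega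

lemma between_of_abs_add {p q r : ℤ} (h : |p - r| = |p - q| + |q - r|) : Btw3 p q r := by
  have h1 := abs_cases (p - q)
  have h2 := abs_cases (q - r)
  have h3 := abs_cases (p - r)
  unfold Btw3
  omega

section ES

variable {α : Type*} [LinearOrder α]

/-- Erdős–Szekeres (adapted from the Mathlib archive). -/
theorem my_erdos_szekeres {r s n : ℕ} {f : Fin n → α} (hn : r * s < n) (hf : Injective f) :
    (∃ t : Finset (Fin n), r < #t ∧ StrictMonoOn f ↑t) ∨
      ∃ t : Finset (Fin n), s < #t ∧ StrictAntiOn f ↑t := by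
  let inc_sequences_ending_in : Fin n → Finset (Finset (Fin n)) := fun i =>
    univ.powerset.filter fun t => Finset.max t = i ∧ StrictMonoOn f ↑t
  let dec_sequences_ending_in : Fin n → Finset (Finset (Fin n)) := fun i =>
    univ.powerset.filter fun t => Finset.max t = i ∧ StrictAntiOn f ↑t
  have inc_i : ∀ i, {i} ∈ inc_sequences_ending_in i := fun i => by
    simp [inc_sequences_ending_in, StrictMonoOn]
  have dec_i : ∀ i, {i} ∈ dec_sequences_ending_in i := fun i => by
    simp [dec_sequences_ending_in, StrictAntiOn]
  let ab' : Fin n → ℕ × ℕ := by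
    intro i
    apply
      (max' ((inc_sequences_ending_in i).image card) (Nonempty.image ⟨{i}, inc_i i⟩ _),
        max' ((dec_sequences_ending_in i).image card) (Nonempty.image ⟨{i}, dec_i i⟩ _))
  generalize hab : ab' = ab
  rsuffices ⟨i, hi⟩ : ∃ i, r < (ab i).1 ∨ s < (ab i).2
  · refine Or.imp ?_ ?_ hi
    on_goal 1 =>
      have : (ab i).1 ∈ image card (inc_sequences_ending_in i) := by
        simp only [← hab]; exact max'_mem _ (Nonempty.image ⟨{i}, inc_i i⟩ _)
    on_goal 2 =>
      have : (ab i).2 ∈ image card (dec_sequences_ending_in i) := by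
        simp only [← hab]; exact max'_mem _ (Nonempty.image ⟨{i}, dec_i i⟩ _)
    all_goals
      intro hi
      rw [mem_image] at this
      obtain ⟨t, ht₁, ht₂⟩ := this
      refine ⟨t, by rwa [ht₂], ?_⟩
      rw [mem_filter] at ht₁
      apply ht₁.2.2
  have : Injective ab := by
    simp only [← hab]
    apply Function.Injective.of_lt_imp_ne
    intro i j k q
    injection q with q₁ q₂
    cases lt_or_gt_of_ne fun _ => ne_of_lt ‹i < j› (hf ‹f i = f j›)
    on_goal 1 =>
      apply ne_of_lt _ q₁
      have : (ab' i).1 ∈ image card (inc_sequences_ending_in i) := by exact max'_mem _ (Nonempty.image ⟨{i}, inc_i i⟩ _)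
    on_goal 2 =>
      apply ne_of_lt _ q₂
      have : (ab' i).2 ∈ image card (dec_sequences_ending_in i) := by exact max'_mem _ (Nonempty.image ⟨{i}, dec_i i⟩ _)
    all_goals
      rw [Nat.lt_iff_add_one_le]
      apply le_max'
      rw [mem_image] at this ⊢
      rcases this with ⟨t, ht₁, ht₂⟩
      rw [mem_filter] at ht₁
      have : t.max = i := by simp only [ht₁.2.1]
      refine ⟨insert j t, ?_, ?_⟩
      · rw [mem_filter]
        refine ⟨?_, ?_, ?_⟩
        · rw [mem_powerset]; apply subset_univ
        · convert max_insert (a := j) (s := t)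
          rw [ht₁.2.1, max_eq_left]
          apply WithBot.coe_le_coe.mpr (le_of_lt ‹i < j›)
        simp only [StrictMonoOn, StrictAntiOn, coe_insert, Set.mem_insert_iff, mem_coe]
        rintro x ⟨rfl | _⟩ y ⟨rfl | _⟩ _
        · apply (irrefl _ ‹j < j›).elim
        · exfalso
          apply not_le_of_gt (_root_.trans ‹i < j› ‹j < y›) (le_max_of_eq ‹y ∈ t› ‹t.max = i›)
        · first
          | apply lt_of_le_of_lt _ ‹f i < f j›
          | apply lt_of_lt_of_le ‹f j < f i› _
          rcases lt_or_eq_of_le (le_max_of_eq ‹x ∈ t› ‹t.max = i›) with (_ | rfl)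
          · apply le_of_lt (ht₁.2.2 ‹x ∈ t› (mem_of_max ‹t.max = i›) ‹x < i›)
          · rfl
        · apply ht₁.2.2 ‹x ∈ t› ‹y ∈ t› ‹x < y›
      · rw [card_insert_of_notMem, ht₂]
        intro
        apply not_le_of_gt ‹i < j› (le_max_of_eq ‹j ∈ t› ‹t.max = i›)
  by_contra! q
  let ran : Finset (ℕ × ℕ) := (range r).image Nat.succ ×ˢ (range s).image Nat.succ
  have : image ab univ ⊆ ran := by
    rintro ⟨x₁, x₂⟩
    simp only [ran, mem_image, exists_prop, mem_range, mem_univ, mem_product, true_and,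
      Prod.ext_iff]
    rintro ⟨i, rfl, rfl⟩
    specialize q i
    have z : 1 ≤ (ab i).1 ∧ 1 ≤ (ab i).2 := by
      simp only [← hab]
      constructor <;>
        · apply le_max'
          rw [mem_image]
          exact ⟨{i}, by solve_by_elim, card_singleton i⟩
    exact ⟨⟨(ab i).1 - 1, by omega⟩, (ab i).2 - 1, by omega⟩
  apply not_le_of_gt hn
  simpa [ran, Nat.succ_injective, card_image_of_injective, ‹Injective ab›] using card_le_card this

end ES

/-- Weak Erdős–Szekeres: a long integer sequence has a weakly monotone subsequence. -/
lemma weakES {N m : ℕ} (h : m * m < N) (a : Fin N → ℤ) :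
    ∃ s : Fin (m + 1) → Fin N, StrictMono s ∧ (Monotone (a ∘ s) ∨ Antitone (a ∘ s)) := by
  classical
  set f : Fin N → ℤ ×ₗ ℕ := fun i => toLex (a i, (i : ℕ)) with hf
  have hinj : Injective f := by
    intro i j hij
    have := congrArg (fun x => (ofLex x).2) hij
    simpa [f] using Fin.ext this
  rcases my_erdos_szekeres (r := m) (s := m) h hinj with ⟨t, ht, hmono⟩ | ⟨t, ht, hanti⟩
  · have hcard : m + 1 ≤ t.card := ht
    set e := t.orderEmbOfCardLe hcard with he
    refine ⟨fun p => e p, e.strictMono, Or.inl ?_⟩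
    intro p q hpq
    rcases eq_or_lt_of_le hpq with rfl | hpq
    · exact le_refl _
    have hlt : e p < e q := e.strictMono hpq
    have h2 := hmono (t.orderEmbOfCardLe_mem hcard p) (t.orderEmbOfCardLe_mem hcard q) hlt
    rw [hf] at h2
    rcases Prod.Lex.lt_iff.1 h2 with h' | ⟨h', _⟩
    · exact le_of_lt h'
    · exact le_of_eq h'
  · have hcard : m + 1 ≤ t.card := ht
    set e := t.orderEmbOfCardLe hcard with he
    refine ⟨fun p => e p, e.strictMono, Or.inr ?_⟩
    intro p q hpq
    rcases eq_or_lt_of_le hpq with rfl | hpq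
    · exact le_refl _
    have hlt : e p < e q := e.strictMono hpq
    have h2 := hanti (show ((e p : Fin N)) ∈ (t : Set (Fin N)) from t.orderEmbOfCardLe_mem hcard p)
      (show ((e q : Fin N)) ∈ (t : Set (Fin N)) from t.orderEmbOfCardLe_mem hcard q) hlt
    rw [hf] at h2
    rcases Prod.Lex.lt_iff.1 h2 with h' | ⟨h', h''⟩
    · exact le_of_lt h'
    · exact absurd h'' (by simp only [ofLex_toLex] at h''; rw [Fin.lt_def] at hlt; omega)

/-- Any sequence of more than `2^(2^d)` points in `ℤ^d` contains a triple, in order,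
which is weakly monotone in every coordinate. -/
lemma keyB (d : ℕ) : ∀ {N : ℕ}, 2 ^ 2 ^ d < N → ∀ a : Fin N → Fin d → ℤ,
    ∃ i j k : Fin N, i < j ∧ j < k ∧ ∀ c, Btw3 (a i c) (a j c) (a k c) := by
  induction d with
  | zero =>
    intro N hN a
    have h3 : 3 ≤ N := by norm_num at hN; omega
    refine ⟨⟨0, by omega⟩, ⟨1, by omega⟩, ⟨2, by omega⟩, ?_, ?_, fun c => c.elim0⟩
    · simp [Fin.lt_def]
    · simp [Fin.lt_def]
  | succ d ih =>
    intro N hN a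
    set m : ℕ := 2 ^ 2 ^ d with hm
    have hmm : m * m < N := by
      have : 2 ^ 2 ^ (d + 1) = m * m := by
        rw [hm, ← pow_add]
        congr 1
        rw [pow_succ]
        omega
      omega
    obtain ⟨s, hs, hmono⟩ := weakES hmm (fun i => a i (Fin.last d))
    obtain ⟨i, j, k, hij, hjk, hbtw⟩ :=
      ih (N := m + 1) (by omega) (fun t c => a (s t) (Fin.castSucc c))
    refine ⟨s i, s j, s k, hs hij, hs hjk, ?_⟩
    intro c
    refine Fin.lastCases ?_ ?_ c
    · rcases hmono with hmo | hmo
      · exact Or.inl ⟨hmo hij.le, hmo hjk.le⟩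
      · exact Or.inr ⟨hmo hjk.le, hmo hij.le⟩
    · intro c'
      exact hbtw c'

/-- Upper bound: a general position set in `ℤ^(d+1)` has at most `2^(2^d)` points. -/
lemma gp_upper (d : ℕ) (S : Set (Fin (d + 1) → ℤ)) (hS : IsGPSet S) :
    S.encard ≤ ((2 ^ 2 ^ d : ℕ) : ℕ∞) := by
  classical
  by_contra hlt
  push_neg at hlt
  set N : ℕ := 2 ^ 2 ^ d + 1 with hNdef
  have hN : (N : ℕ∞) ≤ S.encard := by
    have := Order.add_one_le_of_lt hlt
    rw [hNdef]
    push_cast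
    exact this
  obtain ⟨t, hts, htc⟩ := Set.exists_subset_encard_eq hN
  have htfin : t.Finite := Set.finite_of_encard_eq_coe htc
  have hcard : htfin.toFinset.card = N := by
    have := htfin.encard_eq_coe_toFinset_card
    rw [htc] at this
    exact_mod_cast this.symm
  set e := htfin.toFinset.equivFinOfCardEq hcard with he
  set a0 : Fin N → (Fin (d + 1) → ℤ) := fun i => (e.symm i : Fin (d + 1) → ℤ) with ha0
  have ha0inj : Injective a0 := by
    intro i j hij
    have : (e.symm i : Fin (d+1) → ℤ) = (e.symm j : _) := hij
    exact e.symm.injective (Subtype.ext this)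
  have ha0mem : ∀ i, a0 i ∈ S := by
    intro i
    apply hts
    have := (e.symm i).2
    rw [Set.Finite.mem_toFinset] at this
    exact this
  set σ := Tuple.sort (fun i => a0 i 0) with hσ
  set a : Fin N → (Fin (d + 1) → ℤ) := fun i => a0 (σ i) with ha
  have hainj : Injective a := ha0inj.comp σ.injective
  have hamem : ∀ i, a i ∈ S := fun i => ha0mem _
  have hamono : Monotone (fun i => a i 0) := Tuple.monotone_sort (fun i => a0 i 0)
  obtain ⟨i, j, k, hij, hjk, hbtw⟩ := keyB d (N := N) (by omega)
    (fun t c => a t (Fin.succ c))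
  have hall : ∀ c, Btw3 (a i c) (a j c) (a k c) := by
    intro c
    refine Fin.cases ?_ ?_ c
    · exact Or.inl ⟨hamono hij.le, hamono hjk.le⟩
    · intro c'
      exact hbtw c'
  have hsum : d1 (a i) (a k) = d1 (a i) (a j) + d1 (a j) (a k) := by
    unfold d1
    rw [← Finset.sum_add_distrib]
    exact Finset.sum_congr rfl fun c _ => abs_add_between (hall c)
  exact hS (a i) (hamem i) (a j) (hamem j) (a k) (hamem k)
    (fun hh => (hij.ne (hainj hh)).elim)
    (fun hh => ((hij.trans hjk).ne (hainj hh)).elim)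
    (fun hh => (hjk.ne (hainj hh)).elim) hsum

/-! ### The extremal construction -/

def Mm (d : ℕ) : ℕ := 2 ^ 2 ^ d

lemma Mm_pos (d : ℕ) : 0 < Mm d := Nat.pow_pos (by norm_num)

lemma Mm_succ (d : ℕ) : Mm (d + 1) = Mm d * Mm d := by
  unfold Mm
  rw [← pow_add]
  congr 1
  rw [pow_succ]
  omega

/-- Block index. -/
def blk (d : ℕ) (e : Fin (Mm (d + 1))) : Fin (Mm d) :=
  ⟨e.val / Mm d, by
    rw [Nat.div_lt_iff_lt_mul (Mm_pos d), ← Mm_succ]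
    exact e.isLt⟩

/-- Position within block. -/
def pos (d : ℕ) (e : Fin (Mm (d + 1))) : Fin (Mm d) :=
  ⟨e.val % Mm d, Nat.mod_lt _ (Mm_pos d)⟩

/-- The recursive extremal sequence in `ℤ^d`, of length `2^(2^d)`. -/
def seqq : (d : ℕ) → Fin (Mm d) → Fin d → ℤ
  | 0, _ => Fin.elim0
  | d + 1, e =>
    Fin.snoc (fun c => (Mm d : ℤ) * seqq d (blk d e) c + seqq d (pos d e) c)
      ((Mm d : ℤ) * (blk d e : ℕ) + ((Mm d : ℤ) - 1 - ((pos d e : ℕ) : ℤ)))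

lemma seqq_castSucc (d : ℕ) (e : Fin (Mm (d + 1))) (c : Fin d) :
    seqq (d + 1) e (Fin.castSucc c)
      = (Mm d : ℤ) * seqq d (blk d e) c + seqq d (pos d e) c := by
  simp [seqq, Fin.snoc_castSucc]

lemma seqq_last (d : ℕ) (e : Fin (Mm (d + 1))) :
    seqq (d + 1) e (Fin.last d)
      = (Mm d : ℤ) * (blk d e : ℕ) + ((Mm d : ℤ) - 1 - ((pos d e : ℕ) : ℤ)) := by
  simp [seqq, Fin.snoc_last]

lemma seqq_bounds : ∀ d (i : Fin (Mm d)) (c : Fin d),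
    0 ≤ seqq d i c ∧ seqq d i c < (Mm d : ℤ) := by
  intro d
  induction d with
  | zero => intro i c; exact c.elim0
  | succ d ih =>
    intro i c
    have hM : (0 : ℤ) < (Mm d : ℤ) := by exact_mod_cast Mm_pos d
    have hMs : ((Mm (d+1) : ℕ) : ℤ) = (Mm d : ℤ) * (Mm d : ℤ) := by
      rw [Mm_succ]; push_cast; ring
    refine Fin.lastCases ?_ ?_ c
    · rw [seqq_last]
      have hb : ((blk d i : ℕ) : ℤ) < (Mm d : ℤ) := by exact_mod_cast (blk d i).isLt
      have hp : ((pos d i : ℕ) : ℤ) < (Mm d : ℤ) := by exact_mod_cast (pos d i).isLt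
      have hb0 : (0 : ℤ) ≤ ((blk d i : ℕ) : ℤ) := Int.natCast_nonneg _
      have hp0 : (0 : ℤ) ≤ ((pos d i : ℕ) : ℤ) := Int.natCast_nonneg _
      constructor
      · nlinarith
      · rw [hMs]; nlinarith
    · intro c'
      rw [seqq_castSucc]
      obtain ⟨hb0, hb1⟩ := ih (blk d i) c'
      obtain ⟨hp0, hp1⟩ := ih (pos d i) c'
      constructor
      · nlinarith
      · rw [hMs]; nlinarith

/-- Domination: adding a bounded perturbation to a scaled strict inequality. -/
lemma dom_lt {M a b x y : ℤ} (hx0 : 0 ≤ x) (hx : x < M) (hy0 : 0 ≤ y)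
    (hab : a < b) : M * a + x < M * b + y := by
  have h1 : a + 1 ≤ b := by omega
  have h2 : M * (a + 1) ≤ M * b := mul_le_mul_of_nonneg_left h1 (by omega)
  nlinarith

lemma lex_of_lt {d : ℕ} {x y : Fin (Mm (d + 1))} (h : x < y) :
    blk d x < blk d y ∨ (blk d x = blk d y ∧ pos d x < pos d y) := by
  have hx := Nat.div_add_mod x.val (Mm d)
  have hy := Nat.div_add_mod y.val (Mm d)
  have hdiv : x.val / Mm d ≤ y.val / Mm d := Nat.div_le_div_right (le_of_lt h)
  rcases lt_or_eq_of_le hdiv with hlt | heq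
  · exact Or.inl hlt
  · refine Or.inr ⟨Fin.ext heq, ?_⟩
    have h' : x.val < y.val := h
    rw [heq] at hx
    show x.val % Mm d < y.val % Mm d
    set q := y.val / Mm d with hq
    set t := Mm d * q with ht
    omega

lemma seqq_nonmono : ∀ d (i j k : Fin (Mm d)), i < j → j < k →
    ∃ c : Fin d, (seqq d i c < seqq d j c ∧ seqq d k c < seqq d j c) ∨
      (seqq d j c < seqq d i c ∧ seqq d j c < seqq d k c) := by
  intro d
  induction d with
  | zero =>
    intro i j k hij hjk
    exfalso
    have h1 : i.val < j.val := hij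
    have h2 : j.val < k.val := hjk
    have := k.isLt
    simp only [Mm, pow_zero, pow_one] at this
    omega
  | succ d ih =>
    intro i j k hij hjk
    have hM : (0 : ℤ) < (Mm d : ℤ) := by exact_mod_cast Mm_pos d
    rcases lex_of_lt hij with h12 | ⟨h12, r12⟩ <;> rcases lex_of_lt hjk with h23 | ⟨h23, r23⟩
    · -- three distinct blocks: use inductive hypothesis at block level
      obtain ⟨c, hc⟩ := ih (blk d i) (blk d j) (blk d k) h12 h23
      refine ⟨Fin.castSucc c, ?_⟩
      rw [seqq_castSucc, seqq_castSucc, seqq_castSucc]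
      obtain ⟨hpi0, hpi1⟩ := seqq_bounds d (pos d i) c
      obtain ⟨hpj0, hpj1⟩ := seqq_bounds d (pos d j) c
      obtain ⟨hpk0, hpk1⟩ := seqq_bounds d (pos d k) c
      rcases hc with ⟨h1, h2⟩ | ⟨h1, h2⟩
      · exact Or.inl ⟨dom_lt hpi0 hpi1 hpj0 h1, dom_lt hpk0 hpk1 hpj0 h2⟩
      · exact Or.inr ⟨dom_lt hpj0 hpj1 hpi0 h1, dom_lt hpj0 hpj1 hpk0 h2⟩
    · -- blk i < blk j = blk k : last coordinate, middle above both
      refine ⟨Fin.last d, Or.inl ?_⟩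
      rw [seqq_last, seqq_last, seqq_last]
      have hbij : ((blk d i : ℕ) : ℤ) < ((blk d j : ℕ) : ℤ) := by exact_mod_cast h12
      have hbjk : ((blk d j : ℕ) : ℤ) = ((blk d k : ℕ) : ℤ) := by rw [h23]
      have hrjk : ((pos d j : ℕ) : ℤ) < ((pos d k : ℕ) : ℤ) := by exact_mod_cast r23
      have hpi : ((pos d i : ℕ) : ℤ) < (Mm d : ℤ) := by exact_mod_cast (pos d i).isLt
      have hpj : ((pos d j : ℕ) : ℤ) < (Mm d : ℤ) := by exact_mod_cast (pos d j).isLt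
      have hpi0 : (0 : ℤ) ≤ ((pos d i : ℕ) : ℤ) := Int.natCast_nonneg _
      have hpj0 : (0 : ℤ) ≤ ((pos d j : ℕ) : ℤ) := Int.natCast_nonneg _
      constructor
      · exact dom_lt (by omega) (by omega) (by omega) hbij
      · rw [← hbjk]; omega
    · -- blk i = blk j < blk k : last coordinate, middle below both
      refine ⟨Fin.last d, Or.inr ?_⟩
      rw [seqq_last, seqq_last, seqq_last]
      have hbij : ((blk d i : ℕ) : ℤ) = ((blk d j : ℕ) : ℤ) := by rw [h12]
      have hbjk : ((blk d j : ℕ) : ℤ) < ((blk d k : ℕ) : ℤ) := by exact_mod_cast h23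
      have hrij : ((pos d i : ℕ) : ℤ) < ((pos d j : ℕ) : ℤ) := by exact_mod_cast r12
      have hpj : ((pos d j : ℕ) : ℤ) < (Mm d : ℤ) := by exact_mod_cast (pos d j).isLt
      have hpk : ((pos d k : ℕ) : ℤ) < (Mm d : ℤ) := by exact_mod_cast (pos d k).isLt
      have hpj0 : (0 : ℤ) ≤ ((pos d j : ℕ) : ℤ) := Int.natCast_nonneg _
      have hpk0 : (0 : ℤ) ≤ ((pos d k : ℕ) : ℤ) := Int.natCast_nonneg _
      constructor
      · rw [← hbij]; omega
      · exact dom_lt (by omega) (by omega) (by omega) hbjk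
    · -- all blocks equal: recurse on positions
      obtain ⟨c, hc⟩ := ih (pos d i) (pos d j) (pos d k) r12 (r23)
      refine ⟨Fin.castSucc c, ?_⟩
      rw [seqq_castSucc, seqq_castSucc, seqq_castSucc, h12, h23]
      rcases hc with ⟨h1, h2⟩ | ⟨h1, h2⟩
      · exact Or.inl ⟨by omega, by omega⟩
      · exact Or.inr ⟨by omega, by omega⟩

/-- The extremal point configuration in `ℤ^(d+1)`. -/
def gpoint (d : ℕ) (i : Fin (Mm d)) : Fin (d + 1) → ℤ :=
  Fin.cons (i.val : ℤ) (seqq d i)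

lemma gpoint_zero (d : ℕ) (i : Fin (Mm d)) : gpoint d i 0 = (i.val : ℤ) := rfl

lemma gpoint_succ (d : ℕ) (i : Fin (Mm d)) (c : Fin d) :
    gpoint d i (Fin.succ c) = seqq d i c := by
  simp [gpoint, Fin.cons_succ]

lemma gpoint_inj (d : ℕ) : Injective (gpoint d) := by
  intro i j hij
  have := congrArg (fun p => p 0) hij
  simp only [gpoint_zero] at this
  exact Fin.ext (by exact_mod_cast this)

lemma gp_lower (d : ℕ) :
    ∃ S : Set (Fin (d + 1) → ℤ), IsGPSet S ∧ S.encard = ((2 ^ 2 ^ d : ℕ) : ℕ∞) := by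
  classical
  refine ⟨Set.range (gpoint d), ?_, ?_⟩
  · intro u hu v hv w hw huv huw hvw heq
    obtain ⟨iu, rfl⟩ := hu
    obtain ⟨iv, rfl⟩ := hv
    obtain ⟨iw, rfl⟩ := hw
    -- coordinatewise equality from the ℓ1 equality
    have hco : ∀ c, Btw3 (gpoint d iu c) (gpoint d iv c) (gpoint d iw c) := by
      have hnn : ∀ c ∈ Finset.univ (α := Fin (d+1)),
          (0 : ℤ) ≤ (|gpoint d iu c - gpoint d iv c| + |gpoint d iv c - gpoint d iw c|)
            - |gpoint d iu c - gpoint d iw c| := by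
        intro c _
        have := abs_sub_le (gpoint d iu c) (gpoint d iv c) (gpoint d iw c)
        linarith
      have hsum : ∑ c, ((|gpoint d iu c - gpoint d iv c| + |gpoint d iv c - gpoint d iw c|)
            - |gpoint d iu c - gpoint d iw c|) = 0 := by
        unfold d1 at heq
        rw [Finset.sum_sub_distrib, Finset.sum_add_distrib]
        omega
      have hzero := (Finset.sum_eq_zero_iff_of_nonneg hnn).1 hsum
      intro c
      have := hzero c (Finset.mem_univ c)
      exact between_of_abs_add (by linarith)
    -- indices are distinct
    have hiuv : iu ≠ iv := fun h => huv (by rw [h])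
    have hivw : iv ≠ iw := fun h => hvw (by rw [h])
    have hiuw : iu ≠ iw := fun h => huw (by rw [h])
    -- coordinate 0 forces the index order
    have h0 := hco 0
    rw [gpoint_zero, gpoint_zero, gpoint_zero] at h0
    have hval : (iu.val < iv.val ∧ iv.val < iw.val) ∨ (iw.val < iv.val ∧ iv.val < iu.val) := by
      have h1 : iu.val ≠ iv.val := fun h => hiuv (Fin.ext h)
      have h2 : iv.val ≠ iw.val := fun h => hivw (Fin.ext h)
      have h3 : iu.val ≠ iw.val := fun h => hiuw (Fin.ext h)
      rcases h0 with ⟨ha, hb⟩ | ⟨ha, hb⟩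
      · left; constructor <;> [skip; skip] <;> omega
      · right; constructor <;> [skip; skip] <;> omega
    rcases hval with ⟨h1, h2⟩ | ⟨h1, h2⟩
    · obtain ⟨c, hc⟩ := seqq_nonmono d iu iv iw h1 h2
      have := hco (Fin.succ c)
      rw [gpoint_succ, gpoint_succ, gpoint_succ] at this
      rcases hc with ⟨ha, hb⟩ | ⟨ha, hb⟩ <;> rcases this with ⟨hx, hy⟩ | ⟨hx, hy⟩ <;> linarith
    · obtain ⟨c, hc⟩ := seqq_nonmono d iw iv iu h1 h2
      have := hco (Fin.succ c)
      rw [gpoint_succ, gpoint_succ, gpoint_succ] at this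
      rcases hc with ⟨ha, hb⟩ | ⟨ha, hb⟩ <;> rcases this with ⟨hx, hy⟩ | ⟨hx, hy⟩ <;> linarith
  · rw [← Set.image_univ, (gpoint_inj d).encard_image Set.univ, Set.encard_univ]
    rw [ENat.card_eq_coe_fintype_card]
    simp [Mm]
    erw [Fintype.card_fin]; norm_num

/-- The general position number of the `n`-dimensional integer lattice equals
`2^(2^(n-1))`: every general position set in `ℤ^n` has at most `2^(2^(n-1))`
elements, and there is one with exactly that many elements. -/
theorem gp_number_of_integer_lattice (n : ℕ) (hn : 0 < n) :
    (∀ S : Set (Fin n → ℤ), IsGPSet S → S.encard ≤ 2 ^ 2 ^ (n - 1)) ∧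
    (∃ S : Set (Fin n → ℤ), IsGPSet S ∧ S.encard = 2 ^ 2 ^ (n - 1)) := by
  obtain ⟨d, rfl⟩ : ∃ d, n = d + 1 := ⟨n - 1, (Nat.succ_pred_eq_of_pos hn).symm⟩
  have hcast : ((2 ^ 2 ^ d : ℕ) : ℕ∞) = (2 : ℕ∞) ^ 2 ^ d := by push_cast; rfl
  simp only [Nat.add_sub_cancel]
  constructor
  · intro S hS
    rw [← hcast]
    exact gp_upper d S hS
  · obtain ⟨S, h1, h2⟩ := gp_lower d
    exact ⟨S, h1, by rw [h2, hcast]⟩
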